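/- Let A = [[B, C], [C*, D]] be a complex positive semidefinite block matrix with B and D square blocks of equal size and D positive definite, and let q be a real number with 1 ≤ q < ∞. If ||B||_q = ||C||_q = ||D||_q, then B = C D^{-1} C*. -/

import Mathlib

open Matrix
open scoped ComplexOrder

/-- Matrix power of a Hermitian (positive semidefinite) matrix via the
continuous functional calculus: `A ^ q`. -/
noncomputable def hermPow {n : Type*} [Fintype n] [DecidableEq n]
    (A : Matrix n n ℂ) (q : ℝ) : Matrix n n ℂ :=
  cfc (fun x : ℝ => x ^ q) A

/-- The square root of a positive semidefinite matrix, as `Matrix.PosSemidef.sqrt` was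
defined in the older Mathlib (no longer present). -/
noncomputable def posSemidefSqrt {n : Type*} [Fintype n] [DecidableEq n] {A : Matrix n n ℂ}
    (hA : A.PosSemidef) : Matrix n n ℂ :=
  (hA.1.eigenvectorUnitary : Matrix n n ℂ) *
    diagonal (fun i => ((Real.sqrt (hA.1.eigenvalues i) : ℝ) : ℂ)) *
    (star hA.1.eigenvectorUnitary : Matrix n n ℂ)

/-- Schatten `q`-norm of a complex matrix `T`:
`‖T‖_q = (Tr(|T|^q))^(1/q)` with `|T| = (Tᴴ T)^(1/2)`. -/
noncomputable def schattenQ {m n : Type*} [Fintype m] [Fintype n] [DecidableEq n]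
    (q : ℝ) (T : Matrix m n ℂ) : ℝ :=
  ((hermPow (posSemidefSqrt (Matrix.posSemidef_conjTranspose_mul_self T)) q).trace).re

/-- Geometric mean of positive definite matrices:
`A # B = A^(1/2) (A^(-1/2) B A^(-1/2))^(1/2) A^(1/2)`. -/
noncomputable def geomMean {n : Type*} [Fintype n] [DecidableEq n]
    (A B : Matrix n n ℂ) : Matrix n n ℂ :=
  hermPow A (1/2) * hermPow (hermPow A (-(1/2)) * B * hermPow A (-(1/2))) (1/2) *
    hermPow A (1/2)

/-- The Thompson-type metric `δ_∞(A, B) = max_{λ ∈ spec(A B⁻¹)} |log λ|`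
(for positive definite `A`, `B` the eigenvalues of `A B⁻¹` are positive reals). -/
noncomputable def deltaInf {n : Type*} [Fintype n] [DecidableEq n]
    (A B : Matrix n n ℂ) : ℝ :=
  sSup {x : ℝ | ∃ μ ∈ spectrum ℂ (A * B⁻¹), x = |Real.log ‖μ‖|}

/-! ### Auxiliary lemmas -/

section Aux

open Finset

variable {m k : Type*} [Fintype m] [DecidableEq m] [Fintype k] [DecidableEq k]

omit [DecidableEq m] in
private lemma dotProduct_sumFn (v : m → ℂ) (f : k → m → ℂ) :
    v ⬝ᵥ (∑ i, f i) = ∑ i, v ⬝ᵥ f i := by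
  simp only [dotProduct, Finset.sum_apply, Finset.mul_sum]
  exact Finset.sum_comm

omit [DecidableEq m] in
private lemma sumFn_dotProduct (v : m → ℂ) (f : k → m → ℂ) :
    (∑ i, f i) ⬝ᵥ v = ∑ i, f i ⬝ᵥ v := by
  simp only [dotProduct, Finset.sum_apply, Finset.sum_mul]
  exact Finset.sum_comm

omit [DecidableEq m] [DecidableEq k] in
private lemma re_star_dot_self_nonneg (y : m → ℂ) : 0 ≤ (star y ⬝ᵥ y).re := by
  rw [dotProduct, Complex.re_sum]
  refine Finset.sum_nonneg fun i _ => ?_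
  simpa [Pi.star_apply, ← Complex.normSq_eq_conj_mul_self] using Complex.normSq_nonneg (y i)

omit [DecidableEq m] in
private lemma bessel (u : k → m → ℂ)
    (hu : ∀ i j, star (u i) ⬝ᵥ u j = if i = j then 1 else 0) (x : m → ℂ) :
    ∑ i, Complex.normSq (star (u i) ⬝ᵥ x) ≤ (star x ⬝ᵥ x).re := by
  set b : k → ℂ := fun i => star (u i) ⬝ᵥ x with hb
  set s : m → ℂ := ∑ i, b i • u i with hs
  have hxu : ∀ i, star x ⬝ᵥ u i = star (b i) := fun i => star_dotProduct x (u i)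
  have hxs : star x ⬝ᵥ s = ∑ i, (Complex.normSq (b i) : ℂ) := by
    rw [hs, dotProduct_sumFn]
    refine Finset.sum_congr rfl fun i _ => ?_
    rw [dotProduct_smul, hxu i, Complex.normSq_eq_conj_mul_self]
    simp only [smul_eq_mul, Complex.star_def]
    ring
  have hstar : star s = ∑ i, star (b i) • star (u i) := by
    rw [hs, star_sum]
    exact Finset.sum_congr rfl fun i _ => by rw [star_smul]
  have hsx : star s ⬝ᵥ x = ∑ i, (Complex.normSq (b i) : ℂ) := by
    rw [hstar, sumFn_dotProduct]
    refine Finset.sum_congr rfl fun i _ => ?_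
    have hbi : star (u i) ⬝ᵥ x = b i := rfl
    rw [smul_dotProduct, hbi, Complex.normSq_eq_conj_mul_self]
    simp [smul_eq_mul, Complex.star_def]
  have hss : star s ⬝ᵥ s = ∑ i, (Complex.normSq (b i) : ℂ) := by
    rw [hstar, sumFn_dotProduct]
    refine Finset.sum_congr rfl fun i _ => ?_
    rw [hs, smul_dotProduct, dotProduct_sumFn]
    have : ∀ j, star (u i) ⬝ᵥ (b j • u j) = if i = j then b i else 0 := by
      intro j
      rw [dotProduct_smul, hu i j]
      by_cases h : i = j <;> simp [h]
    rw [Finset.sum_congr rfl fun j _ => this j]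
    simp [Complex.normSq_eq_conj_mul_self, smul_eq_mul]
  have key : (star (x - s) ⬝ᵥ (x - s)).re
      = (star x ⬝ᵥ x).re - ∑ i, Complex.normSq (b i) := by
    have h2 : star (x - s) ⬝ᵥ (x - s)
        = star x ⬝ᵥ x - star x ⬝ᵥ s - (star s ⬝ᵥ x - star s ⬝ᵥ s) := by
      rw [star_sub, sub_dotProduct, dotProduct_sub, dotProduct_sub]
    rw [h2, hxs, hsx, hss]
    simp [Complex.re_sum]
  have h0 := re_star_dot_self_nonneg (x - s)
  rw [key] at h0
  have : ∀ i, Complex.normSq (star (u i) ⬝ᵥ x) = Complex.normSq (b i) := fun i => by rw [hb]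
  rw [Finset.sum_congr rfl fun i _ => this i]
  linarith

omit [DecidableEq k] in
/-- Trace of the Hermitian functional calculus. -/
private lemma trace_cfcHerm {A : Matrix m m ℂ} (hA : A.IsHermitian) (f : ℝ → ℝ) :
    (hA.cfc f).trace = ∑ i, (f (hA.eigenvalues i) : ℂ) := by
  rw [Matrix.IsHermitian.cfc, Unitary.conjStarAlgAut_apply, Matrix.trace_mul_comm, ← Matrix.mul_assoc]
  rw [Unitary.coe_star_mul_self, one_mul, Matrix.trace_diagonal]
  simp

omit [DecidableEq k] in
private lemma re_trace_hermPow {A : Matrix m m ℂ} (hA : A.IsHermitian) (q : ℝ) :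
    (hermPow A q).trace.re = ∑ i, (hA.eigenvalues i) ^ q := by
  rw [hermPow, hA.cfc_eq, trace_cfcHerm]
  simp

omit [DecidableEq k] in
private lemma posSemidefSqrt_eq_cfc {A : Matrix m m ℂ} (hA : A.PosSemidef) :
    posSemidefSqrt hA = cfc Real.sqrt A := by
  rw [hA.1.cfc_eq]
  rfl

omit [DecidableEq k] in
private lemma posSemidefSqrt_mul_self {A : Matrix m m ℂ} (hA : A.PosSemidef) :
    posSemidefSqrt hA * posSemidefSqrt hA = A := by
  have hsa : IsSelfAdjoint A := hA.1
  rw [posSemidefSqrt_eq_cfc, ← cfc_mul Real.sqrt Real.sqrt A]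
  conv_rhs => rw [← cfc_id' ℝ A]
  apply cfc_congr
  intro x hx
  rw [hA.1.spectrum_real_eq_range_eigenvalues] at hx
  obtain ⟨i, rfl⟩ := hx
  exact Real.mul_self_sqrt (hA.eigenvalues_nonneg i)

omit [DecidableEq k] in
private lemma posSemidefSqrt_posSemidef {A : Matrix m m ℂ} (hA : A.PosSemidef) :
    (posSemidefSqrt hA).PosSemidef := by
  have h := (posSemidef_diagonal_iff.mpr (fun i => (by
    exact_mod_cast Real.sqrt_nonneg (hA.1.eigenvalues i) :
      (0 : ℂ) ≤ ((Real.sqrt (hA.1.eigenvalues i) : ℝ) : ℂ)))).mul_mul_conjTranspose_same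
    (hA.1.eigenvectorUnitary : Matrix m m ℂ)
  exact h

omit [DecidableEq k] in
private lemma posSemidefSqrt_self {P : Matrix m m ℂ} (hP : P.PosSemidef) :
    posSemidefSqrt (Matrix.posSemidef_conjTranspose_mul_self P) = P := by
  have hsa : IsSelfAdjoint P := hP.1
  rw [posSemidefSqrt_eq_cfc, hP.1.eq]
  have hPP : P * P = cfc (fun x : ℝ => x * x) P := by
    rw [cfc_mul (fun x : ℝ => x) (fun x : ℝ => x) P, cfc_id' ℝ P]
  rw [hPP, ← cfc_comp' Real.sqrt (fun x : ℝ => x * x) P]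
  conv_rhs => rw [← cfc_id' ℝ P]
  apply cfc_congr
  intro x hx
  rw [hP.1.spectrum_real_eq_range_eigenvalues] at hx
  obtain ⟨i, rfl⟩ := hx
  exact Real.sqrt_mul_self (hP.eigenvalues_nonneg i)

omit [DecidableEq k] in
private lemma schattenQ_posSemidef {P : Matrix m m ℂ} (hP : P.PosSemidef) (q : ℝ) :
    schattenQ q P = ∑ i, hP.1.eigenvalues i ^ q := by
  have h : posSemidefSqrt (Matrix.posSemidef_conjTranspose_mul_self P) = P := by
    exact posSemidefSqrt_self hP
  rw [schattenQ, h]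
  exact re_trace_hermPow hP.1 q

omit [DecidableEq k] in
private lemma trace_eq_sum_eigenvalues {A : Matrix m m ℂ} (hA : A.IsHermitian) :
    A.trace = ∑ i, (hA.eigenvalues i : ℂ) := by
  conv_lhs => rw [hA.spectral_theorem, Unitary.conjStarAlgAut_apply]
  rw [Matrix.trace_mul_comm, ← Matrix.mul_assoc]
  rw [Unitary.coe_star_mul_self, one_mul, Matrix.trace_diagonal]
  simp

omit [DecidableEq k] in
private lemma posSemidef_eq_zero_of_re_trace_eq_zero {A : Matrix m m ℂ}
    (hA : A.PosSemidef) (h : A.trace.re = 0) : A = 0 := by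
  have h1 := trace_eq_sum_eigenvalues hA.1
  have h2 : ∑ i, hA.1.eigenvalues i = 0 := by
    have := congrArg Complex.re h1
    simpa [Complex.re_sum, h] using this.symm
  have h3 : ∀ i ∈ Finset.univ, hA.1.eigenvalues i = 0 :=
    (Finset.sum_eq_zero_iff_of_nonneg (fun i _ => hA.eigenvalues_nonneg i)).mp h2
  have h4 : (RCLike.ofReal ∘ hA.1.eigenvalues : m → ℂ) = 0 := by
    funext i
    simp [h3 i (Finset.mem_univ i)]
  calc A = (hA.1.eigenvectorUnitary : Matrix m m ℂ)
        * diagonal (RCLike.ofReal ∘ hA.1.eigenvalues)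
        * star (hA.1.eigenvectorUnitary : Matrix m m ℂ) := hA.1.spectral_theorem
    _ = 0 := by
        rw [h4]
        rw [show (diagonal (0 : m → ℂ)) = 0 from diagonal_zero]
        rw [Matrix.mul_zero, Matrix.zero_mul]

/-- Peierls-type inequality: for a PSD matrix `T` and an orthonormal family `u`,
`∑ ⟨u i, T u i⟩^q ≤ ∑ λ_j(T)^q` for `q ≥ 1`. -/
private lemma peierls {T : Matrix m m ℂ} (hT : T.PosSemidef) {q : ℝ} (hq : 1 ≤ q)
    (u : k → m → ℂ) (hu : ∀ i j, star (u i) ⬝ᵥ u j = if i = j then 1 else 0) :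
    ∑ i, (star (u i) ⬝ᵥ (T *ᵥ u i)).re ^ q ≤ ∑ j, hT.1.eigenvalues j ^ q := by
  set U : Matrix m m ℂ := (hT.1.eigenvectorUnitary : Matrix m m ℂ) with hU
  set ev : m → ℝ := hT.1.eigenvalues with hev
  have hUU : star U * U = 1 := by
    rw [hU]; exact Unitary.coe_star_mul_self _
  have hUU' : U * star U = 1 := by
    rw [hU]; exact Unitary.coe_mul_star_self _
  set w : k → m → ℂ := fun i => star U *ᵥ u i with hw
  set c : k → m → ℝ := fun i j => Complex.normSq (w i j) with hc
  have hstarw : ∀ i, star (w i) = star (u i) ᵥ* U := by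
    intro i
    rw [hw]
    rw [star_mulVec, star_eq_conjTranspose, conjTranspose_conjTranspose]
  have hval : ∀ i, (star (u i) ⬝ᵥ (T *ᵥ u i)).re = ∑ j, c i j * ev j := by
    intro i
    have hT' : T = U * diagonal (RCLike.ofReal ∘ ev) * star U := hT.1.spectral_theorem
    rw [hT']
    have h1 : (U * diagonal (RCLike.ofReal ∘ ev) * star U) *ᵥ u i
        = U *ᵥ (diagonal (RCLike.ofReal ∘ ev) *ᵥ w i) := by
      rw [hw]
      simp only [mulVec_mulVec, Matrix.mul_assoc]
    rw [h1, dotProduct_mulVec, ← hstarw i]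
    rw [dotProduct, Complex.re_sum]
    refine Finset.sum_congr rfl fun j _ => ?_
    rw [mulVec_diagonal]
    simp only [Pi.star_apply, Function.comp_apply, RCLike.ofReal_alg, Complex.real_smul, mul_one]
    have h3 : (starRingEnd ℂ) (w i j) * ((ev j : ℂ) * w i j)
        = (ev j : ℂ) * ((starRingEnd ℂ) (w i j) * w i j) := by ring
    simp only [Complex.star_def]
    rw [h3, ← Complex.normSq_eq_conj_mul_self, ← Complex.ofReal_mul, Complex.ofReal_re]
    exact mul_comm _ _
  have hrow : ∀ i, ∑ j, c i j = 1 := by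
    intro i
    have h1 : star (w i) ⬝ᵥ w i = 1 := by
      rw [hstarw i, hw]
      simp only []
      rw [← dotProduct_mulVec, mulVec_mulVec, hUU', one_mulVec, hu i i]
      simp
    have h2 : star (w i) ⬝ᵥ w i = ∑ j, (c i j : ℂ) := by
      rw [dotProduct]
      refine Finset.sum_congr rfl fun j _ => ?_
      simp only [Pi.star_apply, Complex.star_def, hc, Complex.normSq_eq_conj_mul_self]
    have := h2.symm.trans h1
    have := congrArg Complex.re this
    simpa [Complex.re_sum] using this
  have hcol : ∀ j, ∑ i, c i j ≤ 1 := by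
    intro j
    have hx : ∀ i, c i j = Complex.normSq (star (u i) ⬝ᵥ (fun a => U a j)) := by
      intro i
      have h4 : w i j = star (fun a => U a j) ⬝ᵥ u i := by
        rw [hw]
        simp [mulVec, dotProduct]
      show Complex.normSq (w i j) = _
      rw [h4, star_dotProduct]
      simp
    have hxx : (star (fun a => U a j) ⬝ᵥ (fun a => U a j)).re = 1 := by
      have : star (fun a => U a j) ⬝ᵥ (fun a => U a j) = (star U * U) j j := by
        simp [Matrix.mul_apply, dotProduct]
      rw [this, hUU]
      simp
    calc ∑ i, c i j = ∑ i, Complex.normSq (star (u i) ⬝ᵥ (fun a => U a j)) :=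
          Finset.sum_congr rfl fun i _ => hx i
      _ ≤ (star (fun a => U a j) ⬝ᵥ (fun a => U a j)).re := bessel u hu _
      _ = 1 := hxx
  have hevnn : ∀ j, 0 ≤ ev j := fun j => hT.eigenvalues_nonneg j
  have hcnn : ∀ i j, 0 ≤ c i j := fun i j => Complex.normSq_nonneg _
  calc ∑ i, (star (u i) ⬝ᵥ (T *ᵥ u i)).re ^ q
      = ∑ i, (∑ j, c i j * ev j) ^ q := by
        exact Finset.sum_congr rfl fun i _ => by rw [hval i]
    _ ≤ ∑ i, ∑ j, c i j * ev j ^ q := by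
        refine Finset.sum_le_sum fun i _ => ?_
        exact Real.rpow_arith_mean_le_arith_mean_rpow univ (c i) ev
          (fun j _ => hcnn i j) (hrow i) (fun j _ => hevnn j) hq
    _ = ∑ j, (∑ i, c i j) * ev j ^ q := by
        rw [Finset.sum_comm]
        exact Finset.sum_congr rfl fun j _ => by rw [Finset.sum_mul]
    _ ≤ ∑ j, ev j ^ q := by
        refine Finset.sum_le_sum fun j _ => ?_
        have := Real.rpow_nonneg (hevnn j) q
        nlinarith [hcol j, Finset.sum_nonneg (fun i (_ : i ∈ univ) => hcnn i j)]

/-- Columns of a matrix with `Uᴴ U = 1` are orthonormal. -/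
private lemma col_orthonormal {U : Matrix m m ℂ} (hUU : star U * U = 1) :
    ∀ i j, star (fun a => U a i) ⬝ᵥ (fun a => U a j) = if i = j then 1 else 0 := by
  intro i j
  have h : star (fun a => U a i) ⬝ᵥ (fun a => U a j) = (star U * U) i j := by
    simp [Matrix.mul_apply, dotProduct]
  rw [h, hUU, Matrix.one_apply]

/-- Eigencolumn relation for a Hermitian matrix. -/
private lemma mulVec_eigcol {M : Matrix m m ℂ} (hM : M.IsHermitian) (i : m) :
    M *ᵥ (fun a => (hM.eigenvectorUnitary : Matrix m m ℂ) a i)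
      = (hM.eigenvalues i : ℂ) • (fun a => (hM.eigenvectorUnitary : Matrix m m ℂ) a i) := by
  have hMU : M * (hM.eigenvectorUnitary : Matrix m m ℂ)
      = (hM.eigenvectorUnitary : Matrix m m ℂ) * diagonal (RCLike.ofReal ∘ hM.eigenvalues) := by
    calc M * (hM.eigenvectorUnitary : Matrix m m ℂ)
        = ((hM.eigenvectorUnitary : Matrix m m ℂ) * diagonal (RCLike.ofReal ∘ hM.eigenvalues)
          * star (hM.eigenvectorUnitary : Matrix m m ℂ)) * (hM.eigenvectorUnitary : Matrix m m ℂ)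
          := by exact congrArg (· * (hM.eigenvectorUnitary : Matrix m m ℂ)) hM.spectral_theorem
      _ = (hM.eigenvectorUnitary : Matrix m m ℂ) * diagonal (RCLike.ofReal ∘ hM.eigenvalues)
          * (star (hM.eigenvectorUnitary : Matrix m m ℂ) * (hM.eigenvectorUnitary : Matrix m m ℂ))
          := by rw [Matrix.mul_assoc]
      _ = _ := by rw [Unitary.coe_star_mul_self, Matrix.mul_one]
  funext a
  have h1 : (M *ᵥ fun a => (hM.eigenvectorUnitary : Matrix m m ℂ) a i) a
      = (M * (hM.eigenvectorUnitary : Matrix m m ℂ)) a i := by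
    simp [mulVec, dotProduct, Matrix.mul_apply]
  rw [h1, hMU, Matrix.mul_diagonal]
  simp [mul_comm]

/-- Trace as a sum over conjugated diagonal entries for a unitary `U`. -/
private lemma trace_conj_unitary (M : Matrix m m ℂ) {U : Matrix m m ℂ}
    (hUU : star U * U = 1) (hUU' : U * star U = 1) :
    M.trace = ∑ i, star (fun a => U a i) ⬝ᵥ (M *ᵥ (fun a => U a i)) := by
  have h1 : (star U * M * U).trace = M.trace := by
    rw [Matrix.trace_mul_comm, ← Matrix.mul_assoc, hUU', Matrix.one_mul]
  rw [← h1, Matrix.trace]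
  refine Finset.sum_congr rfl fun i _ => ?_
  rw [Matrix.diag_apply]
  rw [dotProduct_mulVec]
  have h2 : star (fun a => U a i) ᵥ* M = fun b => (star U * M) i b := by
    funext b
    simp [vecMul, dotProduct, Matrix.mul_apply]
  rw [h2]
  simp [Matrix.mul_apply, dotProduct, mulVec]

end Aux

set_option maxHeartbeats 2000000

/-- If `[[B, C], [Cᴴ, D]]` is positive semidefinite with `D` positive definite
and `‖B‖_q = ‖C‖_q = ‖D‖_q` for some `1 ≤ q < ∞`, then `B = C D⁻¹ Cᴴ`. -/
theorem equal_norms_implies_B_eq {n : ℕ} (B C D : Matrix (Fin n) (Fin n) ℂ)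
    (hA : (Matrix.fromBlocks B C Cᴴ D).PosSemidef) (hD : D.PosDef)
    (q : ℝ) (hq : 1 ≤ q)
    (h1 : schattenQ q B = schattenQ q C) (h2 : schattenQ q C = schattenQ q D) :
    B = C * D⁻¹ * Cᴴ := by
  rcases Nat.eq_zero_or_pos n with hn | hn
  · subst hn
    exact Subsingleton.elim _ _
  classical
  have hq0 : (0:ℝ) < q := lt_of_lt_of_le one_pos hq
  have hDsd : D.PosSemidef := hD.posSemidef
  have hDinv : (D⁻¹).PosDef := hD.inv
  have hDdet : IsUnit D.det := (Matrix.isUnit_iff_isUnit_det D).mp hD.isUnit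
  haveI : Invertible D := Matrix.invertibleOfIsUnitDet D hDdet
  set S : Matrix (Fin n) (Fin n) ℂ := C * D⁻¹ * Cᴴ with hSdef
  have hS : S.PosSemidef := hDinv.posSemidef.mul_mul_conjTranspose_same C
  have hDelta : (B - S).PosSemidef := (Matrix.PosDef.fromBlocks₂₂ B C hD).mp hA
  have hB : B.PosSemidef := by
    have h := hA.submatrix (Sum.inl : Fin n → Fin n ⊕ Fin n)
    have he : (Matrix.fromBlocks B C Cᴴ D).submatrix
        (Sum.inl : Fin n → Fin n ⊕ Fin n) Sum.inl = B := by
      ext i j; rfl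
    rwa [he] at h
  -- eigen data of |C|
  set R : Matrix (Fin n) (Fin n) ℂ := posSemidefSqrt (Matrix.posSemidef_conjTranspose_mul_self C) with hRdef
  have hR : R.PosSemidef := posSemidefSqrt_posSemidef _
  have hRR : R * R = Cᴴ * C := posSemidefSqrt_mul_self _
  set r : Fin n → ℝ := hR.1.eigenvalues with hrdef
  have hrnn : ∀ i, 0 ≤ r i := fun i => hR.eigenvalues_nonneg i
  set v : Fin n → Fin n → ℂ :=
    fun i a => (hR.1.eigenvectorUnitary : Matrix (Fin n) (Fin n) ℂ) a i with hvdef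
  have hv : ∀ i j, star (v i) ⬝ᵥ v j = if i = j then 1 else 0 := fun i j =>
    col_orthonormal (Unitary.coe_star_mul_self _) i j
  have hvunit : ∀ i, star (v i) ⬝ᵥ v i = 1 := fun i => by rw [hv i i]; simp
  have hRv : ∀ i, R *ᵥ v i = (r i : ℂ) • v i := fun i => mulVec_eigcol hR.1 i
  have hCv : ∀ i, (Cᴴ * C) *ᵥ v i = ((r i : ℂ) ^ 2) • v i := by
    intro i
    rw [← hRR, ← Matrix.mulVec_mulVec, hRv i, Matrix.mulVec_smul, hRv i, smul_smul, sq]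
  set mm : Fin n → ℝ := fun i => (star (v i) ⬝ᵥ (D *ᵥ v i)).re with hmmdef
  set ee : Fin n → ℝ := fun i => (star (v i) ⬝ᵥ (D⁻¹ *ᵥ v i)).re with heedef
  have hvne : ∀ i, v i ≠ 0 := by
    intro i h0
    have h := hvunit i
    rw [h0] at h
    simp at h
  have hmpos : ∀ i, 0 < mm i := fun i => hD.re_dotProduct_pos (hvne i)
  have hepos : ∀ i, 0 < ee i := fun i => hDinv.re_dotProduct_pos (hvne i)
  have hDinvD : D⁻¹ * D = 1 := Matrix.nonsing_inv_mul D hDdet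
  have hDDinv : D * D⁻¹ = 1 := Matrix.mul_nonsing_inv D hDdet
  -- Kadison-type inequality : 1 ≤ mm i * ee i
  have hme : ∀ i, 1 ≤ mm i * ee i := by
    intro i
    set t : ℝ := (ee i)⁻¹ with htdef
    have htpos : 0 < t := inv_pos.mpr (hepos i)
    set y : Fin n → ℂ := v i - (t : ℂ) • (D⁻¹ *ᵥ v i) with hy
    have h0 : 0 ≤ (star y ⬝ᵥ (D *ᵥ y)).re := hDsd.re_dotProduct_nonneg y
    have hDy : D *ᵥ y = D *ᵥ v i - (t : ℂ) • v i := by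
      rw [hy, Matrix.mulVec_sub, Matrix.mulVec_smul, Matrix.mulVec_mulVec, hDDinv,
        Matrix.one_mulVec]
    have hsy : star y = star (v i) - (t : ℂ) • star (D⁻¹ *ᵥ v i) := by
      rw [hy, star_sub, star_smul]
      simp [Complex.star_def, Complex.conj_ofReal]
    have hz1 : star (D⁻¹ *ᵥ v i) ⬝ᵥ (D *ᵥ v i) = 1 := by
      rw [star_mulVec, hDinv.1.eq, ← dotProduct_mulVec, Matrix.mulVec_mulVec, hDinvD,
        Matrix.one_mulVec, hvunit i]
    have hz2 : star (D⁻¹ *ᵥ v i) ⬝ᵥ v i = star (v i) ⬝ᵥ (D⁻¹ *ᵥ v i) := by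
      rw [star_mulVec, hDinv.1.eq, ← dotProduct_mulVec]
    have hexp : star y ⬝ᵥ (D *ᵥ y)
        = star (v i) ⬝ᵥ (D *ᵥ v i) - (t : ℂ) - (t : ℂ)
          + (t : ℂ) * (t : ℂ) * (star (v i) ⬝ᵥ (D⁻¹ *ᵥ v i)) := by
      rw [hsy, hDy, sub_dotProduct, dotProduct_sub, dotProduct_sub, smul_dotProduct,
        smul_dotProduct, dotProduct_smul, dotProduct_smul, hvunit i, hz1, hz2]
      simp only [smul_eq_mul]
      ring
    rw [hexp] at h0
    have hre : (star (v i) ⬝ᵥ (D *ᵥ v i) - (t : ℂ) - (t : ℂ)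
          + (t : ℂ) * (t : ℂ) * (star (v i) ⬝ᵥ (D⁻¹ *ᵥ v i))).re
        = mm i - t - t + t * t * ee i := by
      simp [Complex.sub_re, Complex.add_re, Complex.mul_re, Complex.ofReal_re,
        Complex.ofReal_im]
      rfl
    rw [hre] at h0
    have htt : t * t * ee i = t := by
      rw [htdef]
      field_simp
    rw [htt] at h0
    have hmt : t ≤ mm i := by linarith
    have h1e : (ee i) * (ee i)⁻¹ = 1 := mul_inv_cancel₀ (hepos i).ne'
    nlinarith [hepos i, hmpos i]
  -- Schatten quantities
  have htB : schattenQ q B = ∑ i, hB.1.eigenvalues i ^ q := schattenQ_posSemidef hB q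
  have htD : schattenQ q D = ∑ i, hDsd.1.eigenvalues i ^ q := schattenQ_posSemidef hDsd q
  have htC : schattenQ q C = ∑ i, r i ^ q := by
    rw [schattenQ]
    exact re_trace_hermPow hR.1 q
  have htpos : 0 < schattenQ q D := by
    rw [htD]
    haveI : Nonempty (Fin n) := ⟨⟨0, hn⟩⟩
    exact Finset.sum_pos (fun i _ => Real.rpow_pos_of_pos (hD.eigenvalues_pos i) q)
      Finset.univ_nonempty
  -- Peierls for D with basis v
  have hP1 : ∑ i, mm i ^ q ≤ schattenQ q D := by
    rw [htD]
    exact peierls hDsd hq v hv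
  -- the orthonormal family u for S
  have hCdot : ∀ i j : Fin n,
      star (C *ᵥ v i) ⬝ᵥ (C *ᵥ v j) = ((r j : ℂ)) ^ 2 * (if i = j then 1 else 0) := by
    intro i j
    rw [star_mulVec, ← dotProduct_mulVec, Matrix.mulVec_mulVec, hCv j, dotProduct_smul,
      hv i j]
    simp [smul_eq_mul]
  set u : {i : Fin n // r i ≠ 0} → Fin n → ℂ :=
    fun i => ((r i.1 : ℂ))⁻¹ • (C *ᵥ v i.1) with hudef
  have hu : ∀ i j, star (u i) ⬝ᵥ u j = if i = j then 1 else 0 := by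
    intro i j
    have huu : star (u i) ⬝ᵥ u j
        = star ((r i.1 : ℂ))⁻¹ * (((r j.1 : ℂ))⁻¹ * (star (C *ᵥ v i.1) ⬝ᵥ (C *ᵥ v j.1))) := by
      rw [hudef]
      simp only []
      rw [star_smul, smul_dotProduct, dotProduct_smul]
      simp [smul_eq_mul]
    rw [huu, hCdot i.1 j.1]
    by_cases h : i = j
    · subst h
      have hne : (r i.1 : ℂ) ≠ 0 := Complex.ofReal_ne_zero.mpr i.2
      simp only [if_pos rfl, mul_one]
      rw [show star ((r i.1 : ℂ))⁻¹ = ((r i.1 : ℂ))⁻¹ by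
        simp [Complex.star_def, map_inv₀, Complex.conj_ofReal]]
      field_simp
    · have h' : i.1 ≠ j.1 := fun hc => h (Subtype.ext hc)
      simp [h, h']
  -- value of the quadratic form of S on the family u
  have hCCherm : (Cᴴ * C)ᴴ = Cᴴ * C := Matrix.isHermitian_conjTranspose_mul_self C
  have hSval : ∀ i : {i : Fin n // r i ≠ 0},
      (star (u i) ⬝ᵥ (S *ᵥ u i)).re = (r i.1) ^ 2 * ee i.1 := by
    intro i
    have hne : (r i.1 : ℂ) ≠ 0 := Complex.ofReal_ne_zero.mpr i.2
    have hSu : S *ᵥ (C *ᵥ v i.1)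
        = ((r i.1 : ℂ) ^ 2) • (C *ᵥ (D⁻¹ *ᵥ v i.1)) := by
      rw [hSdef]
      rw [Matrix.mulVec_mulVec]
      have hassoc : C * D⁻¹ * Cᴴ * C = C * D⁻¹ * (Cᴴ * C) := by
        rw [Matrix.mul_assoc]
      rw [hassoc, ← Matrix.mulVec_mulVec, hCv i.1, Matrix.mulVec_smul, ← Matrix.mulVec_mulVec]
    have hdot2 : star (C *ᵥ v i.1) ⬝ᵥ (C *ᵥ (D⁻¹ *ᵥ v i.1))
        = ((r i.1 : ℂ) ^ 2) * (star (v i.1) ⬝ᵥ (D⁻¹ *ᵥ v i.1)) := by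
      rw [star_mulVec, ← dotProduct_mulVec, Matrix.mulVec_mulVec]
      have h5 : star (v i.1) ᵥ* (Cᴴ * C) = star ((Cᴴ * C) *ᵥ v i.1) := by
        rw [star_mulVec, hCCherm]
      rw [dotProduct_mulVec, h5, hCv i.1, star_smul, smul_dotProduct]
      simp [Complex.star_def, Complex.conj_ofReal, smul_eq_mul]
    have hval : star (u i) ⬝ᵥ (S *ᵥ u i)
        = ((r i.1 : ℂ)) ^ 2 * (star (v i.1) ⬝ᵥ (D⁻¹ *ᵥ v i.1)) := by
      rw [hudef]
      simp only []
      rw [Matrix.mulVec_smul, hSu, star_smul, smul_dotProduct, dotProduct_smul,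
        dotProduct_smul, hdot2]
      rw [show star ((r i.1 : ℂ))⁻¹ = ((r i.1 : ℂ))⁻¹ by
        simp [Complex.star_def, map_inv₀, Complex.conj_ofReal]]
      simp only [smul_eq_mul]
      field_simp
    rw [hval]
    have : ((r i.1 : ℂ)) ^ 2 = ((((r i.1) ^ 2 : ℝ)) : ℂ) := by push_cast; ring
    rw [this]
    rw [Complex.re_ofReal_mul]
  -- Peierls for S with the family u
  have hP2 : ∑ i : {i : Fin n // r i ≠ 0}, ((r i.1) ^ 2 * ee i.1) ^ q
      ≤ ∑ j, hS.1.eigenvalues j ^ q := by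
    have h := peierls hS hq u hu
    calc ∑ i : {i : Fin n // r i ≠ 0}, ((r i.1) ^ 2 * ee i.1) ^ q
        = ∑ i, (star (u i) ⬝ᵥ (S *ᵥ u i)).re ^ q :=
          Finset.sum_congr rfl fun i _ => by rw [hSval i]
      _ ≤ _ := h
  -- Peierls for B with the eigenbasis of S
  set wS : Fin n → Fin n → ℂ :=
    fun i a => (hS.1.eigenvectorUnitary : Matrix (Fin n) (Fin n) ℂ) a i with hwSdef
  have hwv : ∀ i j, star (wS i) ⬝ᵥ wS j = if i = j then 1 else 0 := fun i j =>
    col_orthonormal (Unitary.coe_star_mul_self _) i j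
  have hwunit : ∀ i, star (wS i) ⬝ᵥ wS i = 1 := fun i => by rw [hwv i i]; simp
  set sev : Fin n → ℝ := hS.1.eigenvalues with hsevdef
  have hsevnn : ∀ i, 0 ≤ sev i := fun i => hS.eigenvalues_nonneg i
  set aB : Fin n → ℝ := fun i => (star (wS i) ⬝ᵥ (B *ᵥ wS i)).re with haBdef
  have hwS_S : ∀ i, (star (wS i) ⬝ᵥ (S *ᵥ wS i)).re = sev i := by
    intro i
    have h6 : S *ᵥ wS i = (sev i : ℂ) • wS i := mulVec_eigcol hS.1 i
    rw [h6, dotProduct_smul, hwunit i]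
    simp
  have haB_ge : ∀ i, sev i ≤ aB i := by
    intro i
    have h : 0 ≤ (star (wS i) ⬝ᵥ ((B - S) *ᵥ wS i)).re := hDelta.re_dotProduct_nonneg (wS i)
    have hexp : star (wS i) ⬝ᵥ ((B - S) *ᵥ wS i)
        = star (wS i) ⬝ᵥ (B *ᵥ wS i) - star (wS i) ⬝ᵥ (S *ᵥ wS i) := by
      rw [Matrix.sub_mulVec, dotProduct_sub]
    rw [hexp] at h
    rw [Complex.sub_re] at h
    have := hwS_S i
    simp only [haBdef]
    linarith
  have hP3 : ∑ i, aB i ^ q ≤ schattenQ q B := by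
    rw [htB]
    exact peierls hB hq wS hwv
  -- assembling the Cauchy-Schwarz chain
  have hsplit : ∑ i, r i ^ q = ∑ i : {i : Fin n // r i ≠ 0}, r i.1 ^ q := by
    rw [← Finset.sum_filter_of_ne (p := fun i => r i ≠ 0)
      (fun x _ hx => fun hr0 => hx (by rw [hr0, Real.zero_rpow hq0.ne']))]
    exact (Finset.sum_subtype _ (by simp) _)
  have hmq_pos : ∀ i, 0 < mm i ^ q := fun i => Real.rpow_pos_of_pos (hmpos i) q
  have hCS : (∑ i : {i : Fin n // r i ≠ 0}, r i.1 ^ q) ^ 2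
      ≤ (∑ i : {i : Fin n // r i ≠ 0}, ((r i.1) ^ 2 * ee i.1) ^ q)
        * (∑ i : {i : Fin n // r i ≠ 0}, mm i.1 ^ q) := by
    have step1 : (∑ i : {i : Fin n // r i ≠ 0}, r i.1 ^ q) ^ 2
        ≤ (∑ i : {i : Fin n // r i ≠ 0}, (r i.1 ^ q) ^ 2 * (mm i.1 ^ q)⁻¹)
          * (∑ i : {i : Fin n // r i ≠ 0}, mm i.1 ^ q) := by
      refine Finset.sum_sq_le_sum_mul_sum_of_sq_eq_mul Finset.univ
        (fun i _ => ?_) (fun i _ => (hmq_pos i.1).le) (fun i _ => ?_)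
      · exact mul_nonneg (sq_nonneg _) (inv_nonneg.mpr (hmq_pos i.1).le)
      · rw [mul_assoc, inv_mul_cancel₀ (hmq_pos i.1).ne', mul_one]
    refine le_trans step1 (mul_le_mul_of_nonneg_right (Finset.sum_le_sum fun i _ => ?_)
      (Finset.sum_nonneg fun i _ => (hmq_pos i.1).le))
    -- (r^q)^2 * (m^q)⁻¹ ≤ (r² e)^q
    have h7 : (r i.1 ^ q) ^ 2 = (r i.1 ^ 2) ^ q := by
      rw [sq, sq, Real.mul_rpow (hrnn i.1) (hrnn i.1)]
    have h8 : ((r i.1) ^ 2 * ee i.1) ^ q = (r i.1 ^ 2) ^ q * ee i.1 ^ q :=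
      Real.mul_rpow (by positivity) (hepos i.1).le
    have h9 : 1 ≤ mm i.1 ^ q * ee i.1 ^ q := by
      rw [← Real.mul_rpow (hmpos i.1).le (hepos i.1).le]
      exact Real.one_le_rpow (hme i.1) hq0.le
    have h10 : (mm i.1 ^ q)⁻¹ ≤ ee i.1 ^ q := by
      rw [inv_le_iff_one_le_mul₀ (hmq_pos i.1)]
      linarith [h9]
    rw [h7, h8]
    have : (0:ℝ) ≤ (r i.1 ^ 2) ^ q := Real.rpow_nonneg (by positivity) q
    exact mul_le_mul_of_nonneg_left h10 this
  have hKm : ∑ i : {i : Fin n // r i ≠ 0}, mm i.1 ^ q ≤ ∑ i, mm i ^ q := by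
    calc ∑ i : {i : Fin n // r i ≠ 0}, mm i.1 ^ q
        = ∑ i ∈ Finset.univ.filter (fun i => r i ≠ 0), mm i ^ q :=
          (Finset.sum_subtype (Finset.univ.filter (fun i => r i ≠ 0)) (by simp)
            (fun i => mm i ^ q)).symm
      _ ≤ ∑ i, mm i ^ q := Finset.sum_le_sum_of_subset_of_nonneg
          (Finset.filter_subset _ _) (fun i _ _ => (hmq_pos i).le)
  -- final numeric chain
  set t : ℝ := schattenQ q D with htdef2
  have htC' : schattenQ q C = t := h2
  have htB' : schattenQ q B = t := h1.trans h2
  set TS : ℝ := ∑ j, hS.1.eigenvalues j ^ q with hTSdef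
  have hTS_le : TS ≤ t := by
    have e1 : TS = ∑ i, sev i ^ q := rfl
    have e2 : ∑ i, sev i ^ q ≤ ∑ i, aB i ^ q :=
      Finset.sum_le_sum fun i _ => Real.rpow_le_rpow (hsevnn i) (haB_ge i) hq0.le
    have e3 : ∑ i, aB i ^ q ≤ t := by rw [← htB']; exact hP3
    linarith
  have ht_le : t ≤ TS := by
    have e4 : t ^ 2 ≤ TS * t := by
      have e5 : t = ∑ i : {i : Fin n // r i ≠ 0}, r i.1 ^ q := by
        rw [← htC', htC, hsplit]
      have e6 : ∑ i : {i : Fin n // r i ≠ 0}, ((r i.1) ^ 2 * ee i.1) ^ q ≤ TS := hP2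
      have e7 : ∑ i : {i : Fin n // r i ≠ 0}, mm i.1 ^ q ≤ t := by
        calc ∑ i : {i : Fin n // r i ≠ 0}, mm i.1 ^ q ≤ ∑ i, mm i ^ q := hKm
          _ ≤ t := hP1
      calc t ^ 2 = (∑ i : {i : Fin n // r i ≠ 0}, r i.1 ^ q) ^ 2 := by rw [e5]
        _ ≤ (∑ i : {i : Fin n // r i ≠ 0}, ((r i.1) ^ 2 * ee i.1) ^ q)
            * (∑ i : {i : Fin n // r i ≠ 0}, mm i.1 ^ q) := hCS
        _ ≤ TS * t := by
            have hnn1 : (0:ℝ) ≤ ∑ i : {i : Fin n // r i ≠ 0}, ((r i.1) ^ 2 * ee i.1) ^ q :=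
              Finset.sum_nonneg fun i _ => Real.rpow_nonneg
                (mul_nonneg (sq_nonneg _) (hepos i.1).le) q
            have hnn2 : (0:ℝ) ≤ ∑ i : {i : Fin n // r i ≠ 0}, mm i.1 ^ q :=
              Finset.sum_nonneg fun i _ => (hmq_pos i.1).le
            have hTSnn : (0:ℝ) ≤ TS := Finset.sum_nonneg fun i _ =>
              Real.rpow_nonneg (hsevnn i) q
            exact mul_le_mul e6 e7 hnn2 hTSnn
    have e8 : t * t ≤ TS * t := by nlinarith [e4]
    exact le_of_mul_le_mul_right e8 htpos
  have hTS_eq : TS = t := le_antisymm hTS_le ht_le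
  -- equality analysis
  have hsum_eq : ∑ i, aB i ^ q = ∑ i, sev i ^ q := by
    have e2 : ∑ i, sev i ^ q ≤ ∑ i, aB i ^ q :=
      Finset.sum_le_sum fun i _ => Real.rpow_le_rpow (hsevnn i) (haB_ge i) hq0.le
    have e3 : ∑ i, aB i ^ q ≤ t := by rw [← htB']; exact hP3
    have e1 : (∑ i, sev i ^ q) = TS := rfl
    linarith [hTS_eq.ge, hTS_eq.le]
  have hterm : ∀ i, aB i = sev i := by
    intro i
    have hz : ∑ i, (aB i ^ q - sev i ^ q) = 0 := by
      rw [Finset.sum_sub_distrib, hsum_eq, sub_self]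
    have hnn : ∀ j ∈ Finset.univ, 0 ≤ aB j ^ q - sev j ^ q := fun j _ => by
      have := Real.rpow_le_rpow (hsevnn j) (haB_ge j) hq0.le
      linarith
    have h0 := (Finset.sum_eq_zero_iff_of_nonneg hnn).mp hz i (Finset.mem_univ i)
    by_contra hne
    have hlt : sev i < aB i := lt_of_le_of_ne (haB_ge i) (fun hc => hne hc.symm)
    have := Real.rpow_lt_rpow (hsevnn i) hlt hq0
    linarith
  -- trace of B - S vanishes
  have htr : (B - S).trace.re = 0 := by
    have h11 : (B - S).trace
        = ∑ i, star (wS i) ⬝ᵥ ((B - S) *ᵥ wS i) :=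
      trace_conj_unitary (B - S) (Unitary.coe_star_mul_self _) (Unitary.coe_mul_star_self _)
    rw [h11, Complex.re_sum]
    have h12 : ∀ i, (star (wS i) ⬝ᵥ ((B - S) *ᵥ wS i)).re = aB i - sev i := by
      intro i
      rw [Matrix.sub_mulVec, dotProduct_sub, Complex.sub_re, hwS_S i]
    rw [Finset.sum_congr rfl fun i _ => h12 i]
    simp [hterm]
  have hzero : B - S = 0 := posSemidef_eq_zero_of_re_trace_eq_zero hDelta htr
  have := sub_eq_zero.mp hzero
  rw [this]
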